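/- Let p be a prime and β ≥ 1 an integer. Let A = { h ∈ ι(H(ℚ_p)) : γ⁻¹·h·γ ∈ K_Kl(p^β) } and B = { h ∈ ι(H(ℚ_p)) : γ̂⁻¹·h·γ̂ ∈ K_B(p^β) }. Then B is a subgroup of A of index p^β; more precisely, the matrices δ_a = I + a·E₂₃ for a ∈ {0, 1, …, p^β − 1} (where E₂₃ has a single nonzero entry 1 in position (2,3)) all lie in A, the cosets δ_a·B are pairwise disjoint, and their union is A. -/

import Mathlib

open Matrix

noncomputable section

/-- The Weyl representative `w₁`. -/
def w1 (R : Type*) [CommRing R] : Matrix (Fin 4) (Fin 4) R :=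
  !![1, 0, 0, 0;
     0, 0, 1, 0;
     0, -1, 0, 0;
     0, 0, 0, 1]

/-- The matrix `γ`. -/
def gammaMat (R : Type*) [CommRing R] : Matrix (Fin 4) (Fin 4) R :=
  !![1, 0, 0, 0;
     1, 1, 0, 0;
     0, 0, 1, 0;
     0, 0, -1, 1]

/-- The matrix `γ̂ = γ·w₁`. -/
def gammaHat (R : Type*) [CommRing R] : Matrix (Fin 4) (Fin 4) R :=
  gammaMat R * w1 R

/-- The embedding `ι` of a pair of 2×2 matrices into 4×4 matrices. -/
def iotaMat {K : Type*} [CommRing K] (h₁ h₂ : Matrix (Fin 2) (Fin 2) K) :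
    Matrix (Fin 4) (Fin 4) K :=
  !![h₁ 0 0, 0, 0, h₁ 0 1;
     0, h₂ 0 0, h₂ 0 1, 0;
     0, h₂ 1 0, h₂ 1 1, 0;
     h₁ 1 0, 0, 0, h₁ 1 1]

/-- Membership in `GL_n(ℤ_p)` for a matrix over `ℚ_p`: integral entries and unit determinant. -/
def InGLZp {p : ℕ} [Fact p.Prime] {n : ℕ} (g : Matrix (Fin n) (Fin n) ℚ_[p]) : Prop :=
  (∀ i j, ‖g i j‖ ≤ 1) ∧ ‖g.det‖ = 1

/-- The depth-`p^β` Iwahori `K_B(p^β) ⊂ GL₄(ℤ_p)`. -/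
def KB (p : ℕ) [Fact p.Prime] (β : ℕ) : Set (Matrix (Fin 4) (Fin 4) ℚ_[p]) :=
  {g | InGLZp g ∧
    ‖g 1 0‖ ≤ (p : ℝ) ^ (-(β : ℤ)) ∧ ‖g 2 0‖ ≤ (p : ℝ) ^ (-(β : ℤ)) ∧
    ‖g 2 1‖ ≤ (p : ℝ) ^ (-(β : ℤ)) ∧ ‖g 3 0‖ ≤ (p : ℝ) ^ (-(β : ℤ)) ∧
    ‖g 3 1‖ ≤ (p : ℝ) ^ (-(β : ℤ)) ∧ ‖g 3 2‖ ≤ (p : ℝ) ^ (-(β : ℤ))}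

/-- The depth-`p^β` Klingen parahoric `K_Kl(p^β) ⊂ GL₄(ℤ_p)`. -/
def KKl (p : ℕ) [Fact p.Prime] (β : ℕ) : Set (Matrix (Fin 4) (Fin 4) ℚ_[p]) :=
  {g | InGLZp g ∧
    ‖g 1 0‖ ≤ (p : ℝ) ^ (-(β : ℤ)) ∧ ‖g 2 0‖ ≤ (p : ℝ) ^ (-(β : ℤ)) ∧
    ‖g 3 0‖ ≤ (p : ℝ) ^ (-(β : ℤ)) ∧ ‖g 3 1‖ ≤ (p : ℝ) ^ (-(β : ℤ)) ∧
    ‖g 3 2‖ ≤ (p : ℝ) ^ (-(β : ℤ))}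

/-- The image `ι(H(ℚ_p))`: matrices `ι(h₁,h₂)` for invertible `h₁, h₂` with equal determinant. -/
def iotaHSet (p : ℕ) [Fact p.Prime] : Set (Matrix (Fin 4) (Fin 4) ℚ_[p]) :=
  {g | ∃ h₁ h₂ : Matrix (Fin 2) (Fin 2) ℚ_[p],
    IsUnit h₁.det ∧ IsUnit h₂.det ∧ h₁.det = h₂.det ∧ g = iotaMat h₁ h₂}

/-- `A = { h ∈ ι(H(ℚ_p)) : γ⁻¹·h·γ ∈ K_Kl(p^β) }`. -/
def Aset (p : ℕ) [Fact p.Prime] (β : ℕ) : Set (Matrix (Fin 4) (Fin 4) ℚ_[p]) :=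
  {g | g ∈ iotaHSet p ∧ (gammaMat ℚ_[p])⁻¹ * g * gammaMat ℚ_[p] ∈ KKl p β}

/-- `B = { h ∈ ι(H(ℚ_p)) : γ̂⁻¹·h·γ̂ ∈ K_B(p^β) }`. -/
def Bset (p : ℕ) [Fact p.Prime] (β : ℕ) : Set (Matrix (Fin 4) (Fin 4) ℚ_[p]) :=
  {g | g ∈ iotaHSet p ∧ (gammaHat ℚ_[p])⁻¹ * g * gammaHat ℚ_[p] ∈ KB p β}

/-- The coset representatives `δ_a = I + a·E₂₃`. -/
def deltaA (p : ℕ) [Fact p.Prime] (a : ℕ) : Matrix (Fin 4) (Fin 4) ℚ_[p] :=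
  1 + (a : ℚ_[p]) • Matrix.single 1 2 1


namespace Stmt15Aux

variable {p : ℕ} [Fact p.Prime]

def gInv (p : ℕ) [Fact p.Prime] : Matrix (Fin 4) (Fin 4) ℚ_[p] :=
  !![1,0,0,0; -1,1,0,0; 0,0,1,0; 0,0,1,1]

def w1Inv (p : ℕ) [Fact p.Prime] : Matrix (Fin 4) (Fin 4) ℚ_[p] :=
  !![1,0,0,0; 0,0,-1,0; 0,1,0,0; 0,0,0,1]

def ghInv (p : ℕ) [Fact p.Prime] : Matrix (Fin 4) (Fin 4) ℚ_[p] :=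
  !![1,0,0,0; 0,0,-1,0; -1,1,0,0; 0,0,1,1]

lemma gamma_inv : (gammaMat ℚ_[p])⁻¹ = gInv p := by
  apply Matrix.inv_eq_right_inv
  ext i j
  fin_cases i <;> fin_cases j <;>
    simp [gammaMat, gInv, Matrix.mul_apply, Fin.sum_univ_four, Matrix.one_apply,
      vecHead, vecTail]

lemma gammaHat_inv : (gammaHat ℚ_[p])⁻¹ = ghInv p := by
  apply Matrix.inv_eq_right_inv
  ext i j
  fin_cases i <;> fin_cases j <;>
    simp [gammaHat, gammaMat, w1, ghInv, Matrix.mul_apply, Fin.sum_univ_four,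
      Matrix.one_apply, vecHead, vecTail]

lemma ghInv_eq : ghInv p = w1Inv p * gInv p := by
  ext i j
  fin_cases i <;> fin_cases j <;>
    simp [ghInv, w1Inv, gInv, Matrix.mul_apply, Fin.sum_univ_four, vecHead, vecTail]

def Mm (h₁ h₂ : Matrix (Fin 2) (Fin 2) ℚ_[p]) : Matrix (Fin 4) (Fin 4) ℚ_[p] :=
  !![h₁ 0 0, 0, -h₁ 0 1, h₁ 0 1;
     h₂ 0 0 - h₁ 0 0, h₂ 0 0, h₂ 0 1 + h₁ 0 1, -h₁ 0 1;
     h₂ 1 0, h₂ 1 0, h₂ 1 1, 0;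
     h₂ 1 0 + h₁ 1 0, h₂ 1 0, h₂ 1 1 - h₁ 1 1, h₁ 1 1]

def Nm (h₁ h₂ : Matrix (Fin 2) (Fin 2) ℚ_[p]) : Matrix (Fin 4) (Fin 4) ℚ_[p] :=
  !![h₁ 0 0, h₁ 0 1, 0, h₁ 0 1;
     -h₂ 1 0, h₂ 1 1, -h₂ 1 0, 0;
     h₂ 0 0 - h₁ 0 0, -(h₂ 0 1 + h₁ 0 1), h₂ 0 0, -h₁ 0 1;
     h₂ 1 0 + h₁ 1 0, h₁ 1 1 - h₂ 1 1, h₂ 1 0, h₁ 1 1]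

set_option maxHeartbeats 1000000 in
lemma conjA (h₁ h₂ : Matrix (Fin 2) (Fin 2) ℚ_[p]) :
    gInv p * iotaMat h₁ h₂ * gammaMat ℚ_[p] = Mm h₁ h₂ := by
  ext i j
  fin_cases i <;> fin_cases j <;>
    (simp [gInv, iotaMat, gammaMat, Mm, Matrix.mul_apply, Fin.sum_univ_four,
      vecHead, vecTail]; try ring)

set_option maxHeartbeats 1000000 in
lemma w1conj (h₁ h₂ : Matrix (Fin 2) (Fin 2) ℚ_[p]) :
    w1Inv p * Mm h₁ h₂ * w1 ℚ_[p] = Nm h₁ h₂ := by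
  ext i j
  fin_cases i <;> fin_cases j <;>
    (simp [w1Inv, w1, Mm, Nm, Matrix.mul_apply, Fin.sum_univ_four,
      vecHead, vecTail]; try ring)

lemma conjB (h₁ h₂ : Matrix (Fin 2) (Fin 2) ℚ_[p]) :
    ghInv p * iotaMat h₁ h₂ * gammaHat ℚ_[p] = Nm h₁ h₂ := by
  calc ghInv p * iotaMat h₁ h₂ * gammaHat ℚ_[p]
      = w1Inv p * (gInv p * iotaMat h₁ h₂ * gammaMat ℚ_[p]) * w1 ℚ_[p] := by
        rw [ghInv_eq, gammaHat]; simp only [← Matrix.mul_assoc]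
    _ = w1Inv p * Mm h₁ h₂ * w1 ℚ_[p] := by rw [conjA]
    _ = Nm h₁ h₂ := w1conj h₁ h₂

set_option maxHeartbeats 1000000 in
lemma det_iota (h₁ h₂ : Matrix (Fin 2) (Fin 2) ℚ_[p]) :
    (iotaMat h₁ h₂).det = h₁.det * h₂.det := by
  have e0 : (Fin.succAbove (0 : Fin 4) (2 : Fin 3)) = 3 := rfl
  have e1 : (Fin.succAbove (3 : Fin 4) (2 : Fin 3)) = 2 := rfl
  have e2 : (Fin.succAbove (1 : Fin 4) (2 : Fin 3)) = 3 := rfl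
  have e3 : (Fin.succAbove (2 : Fin 4) (2 : Fin 3)) = 3 := rfl
  simp [iotaMat, Matrix.det_succ_row_zero, Fin.sum_univ_succ, Matrix.det_fin_two, e0, e1, e2, e3]
  ring

set_option maxHeartbeats 1000000 in
lemma det_Mm (h₁ h₂ : Matrix (Fin 2) (Fin 2) ℚ_[p]) :
    (Mm h₁ h₂).det = h₁.det * h₂.det := by
  have e0 : (Fin.succAbove (0 : Fin 4) (2 : Fin 3)) = 3 := rfl
  have e1 : (Fin.succAbove (3 : Fin 4) (2 : Fin 3)) = 2 := rfl
  have e2 : (Fin.succAbove (1 : Fin 4) (2 : Fin 3)) = 3 := rfl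
  have e3 : (Fin.succAbove (2 : Fin 4) (2 : Fin 3)) = 3 := rfl
  simp [Mm, Matrix.det_succ_row_zero, Fin.sum_univ_succ, Matrix.det_fin_two, e0, e1, e2, e3]
  ring

set_option maxHeartbeats 1000000 in
lemma det_Nm (h₁ h₂ : Matrix (Fin 2) (Fin 2) ℚ_[p]) :
    (Nm h₁ h₂).det = h₁.det * h₂.det := by
  have e0 : (Fin.succAbove (0 : Fin 4) (2 : Fin 3)) = 3 := rfl
  have e1 : (Fin.succAbove (3 : Fin 4) (2 : Fin 3)) = 2 := rfl
  have e2 : (Fin.succAbove (1 : Fin 4) (2 : Fin 3)) = 3 := rfl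
  have e3 : (Fin.succAbove (2 : Fin 4) (2 : Fin 3)) = 3 := rfl
  simp [Nm, Matrix.det_succ_row_zero, Fin.sum_univ_succ, Matrix.det_fin_two, e0, e1, e2, e3]
  ring

set_option maxHeartbeats 1000000 in
lemma iota_mul (h₁ h₂ k₁ k₂ : Matrix (Fin 2) (Fin 2) ℚ_[p]) :
    iotaMat h₁ h₂ * iotaMat k₁ k₂ = iotaMat (h₁ * k₁) (h₂ * k₂) := by
  show (!![h₁ 0 0, 0, 0, h₁ 0 1; 0, h₂ 0 0, h₂ 0 1, 0; 0, h₂ 1 0, h₂ 1 1, 0; h₁ 1 0, 0, 0, h₁ 1 1]) *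
    !![k₁ 0 0, 0, 0, k₁ 0 1; 0, k₂ 0 0, k₂ 0 1, 0; 0, k₂ 1 0, k₂ 1 1, 0; k₁ 1 0, 0, 0, k₁ 1 1] =
    !![(h₁*k₁) 0 0, 0, 0, (h₁*k₁) 0 1; 0, (h₂*k₂) 0 0, (h₂*k₂) 0 1, 0; 0, (h₂*k₂) 1 0, (h₂*k₂) 1 1, 0; (h₁*k₁) 1 0, 0, 0, (h₁*k₁) 1 1]
  ext i j
  fin_cases i <;> fin_cases j <;>
    (simp [Matrix.mul_apply, Fin.sum_univ_four, Fin.sum_univ_two, vecHead, vecTail]; try ring)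


lemma nadd {x y : ℚ_[p]} {r : ℝ} (hx : ‖x‖ ≤ r) (hy : ‖y‖ ≤ r) : ‖x + y‖ ≤ r :=
  le_trans (Padic.nonarchimedean x y) (max_le hx hy)

lemma nsub {x y : ℚ_[p]} {r : ℝ} (hx : ‖x‖ ≤ r) (hy : ‖y‖ ≤ r) : ‖x - y‖ ≤ r := by
  rw [sub_eq_add_neg]; exact nadd hx (by simpa using hy)

lemma nmul {x y : ℚ_[p]} {r : ℝ} (hx : ‖x‖ ≤ 1) (hy : ‖y‖ ≤ r) (hr : 0 ≤ r) :
    ‖x * y‖ ≤ r := by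
  rw [norm_mul]; nlinarith [norm_nonneg x, norm_nonneg y]

lemma nat_norm (a : ℕ) : ‖((a : ℚ_[p]))‖ ≤ 1 := by
  have := Padic.norm_int_le_one (p := p) (a : ℤ)
  push_cast at this; exact this

lemma eps_nonneg (p β : ℕ) : (0:ℝ) ≤ (p:ℝ) ^ (-(β:ℤ)) := by positivity

lemma eps_le_one (β : ℕ) : (p:ℝ) ^ (-(β:ℤ)) ≤ 1 :=
  zpow_le_one_of_nonpos₀ (by exact_mod_cast (Fact.out : p.Prime).one_lt.le) (by simp)

lemma eps_lt_one {β : ℕ} (hβ : 1 ≤ β) : (p:ℝ) ^ (-(β:ℤ)) < 1 := by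
  have hp : (1:ℝ) < p := by exact_mod_cast (Fact.out : p.Prime).one_lt
  rw [_root_.zpow_neg, zpow_natCast]
  exact inv_lt_one_of_one_lt₀ (one_lt_pow₀ hp (by omega))

/-- the conditions cutting out `A` on pairs of 2×2 matrices -/
def CondA (p : ℕ) [Fact p.Prime] (β : ℕ) (h₁ h₂ : Matrix (Fin 2) (Fin 2) ℚ_[p]) : Prop :=
  (∀ i j, ‖h₁ i j‖ ≤ 1) ∧ (∀ i j, ‖h₂ i j‖ ≤ 1) ∧ ‖h₁.det‖ = 1 ∧ h₁.det = h₂.det ∧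
  ‖h₁ 1 0‖ ≤ (p:ℝ) ^ (-(β:ℤ)) ∧ ‖h₂ 1 0‖ ≤ (p:ℝ) ^ (-(β:ℤ)) ∧
  ‖h₂ 0 0 - h₁ 0 0‖ ≤ (p:ℝ) ^ (-(β:ℤ)) ∧ ‖h₂ 1 1 - h₁ 1 1‖ ≤ (p:ℝ) ^ (-(β:ℤ))

/-- the conditions cutting out `B` -/
def CondB (p : ℕ) [Fact p.Prime] (β : ℕ) (h₁ h₂ : Matrix (Fin 2) (Fin 2) ℚ_[p]) : Prop :=
  CondA p β h₁ h₂ ∧ ‖h₂ 0 1 + h₁ 0 1‖ ≤ (p:ℝ) ^ (-(β:ℤ))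

set_option maxHeartbeats 4000000 in
lemma Mm_entries {β : ℕ} (h₁ h₂ : Matrix (Fin 2) (Fin 2) ℚ_[p])
    (H1 : ∀ i j, ‖h₁ i j‖ ≤ 1) (H2 : ∀ i j, ‖h₂ i j‖ ≤ 1)
    (c1 : ‖h₁ 1 0‖ ≤ (p:ℝ) ^ (-(β:ℤ))) :
    ∀ i j, ‖Mm h₁ h₂ i j‖ ≤ 1 := by
  intro i j
  fin_cases i <;> fin_cases j <;> simp [Mm] <;>
    first
    | exact H1 _ _ | exact H2 _ _
    | exact nadd (H2 _ _) (H1 _ _) | exact nsub (H2 _ _) (H1 _ _)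
    | exact le_trans c1 (eps_le_one β)

set_option maxHeartbeats 4000000 in
lemma Nm_entries {β : ℕ} (h₁ h₂ : Matrix (Fin 2) (Fin 2) ℚ_[p])
    (H1 : ∀ i j, ‖h₁ i j‖ ≤ 1) (H2 : ∀ i j, ‖h₂ i j‖ ≤ 1)
    (c1 : ‖h₁ 1 0‖ ≤ (p:ℝ) ^ (-(β:ℤ))) :
    ∀ i j, ‖Nm h₁ h₂ i j‖ ≤ 1 := by
  intro i j
  fin_cases i <;> fin_cases j <;> simp [Nm] <;>
    first
    | exact H1 _ _ | exact H2 _ _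
    | exact nadd (H2 _ _) (H1 _ _) | exact nsub (H2 _ _) (H1 _ _)
    | exact nsub (H1 _ _) (H2 _ _)
    | (rw [← neg_add, norm_neg]; exact nadd (H1 _ _) (H2 _ _))
    | exact le_trans c1 (eps_le_one β)


set_option maxHeartbeats 1000000 in
lemma memA_iff {β : ℕ} {g : Matrix (Fin 4) (Fin 4) ℚ_[p]} :
    g ∈ Aset p β ↔ ∃ h₁ h₂, CondA p β h₁ h₂ ∧ g = iotaMat h₁ h₂ := by
  constructor
  · rintro ⟨⟨h₁, h₂, u1, u2, hdd, rfl⟩, hK⟩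
    rw [gamma_inv, conjA] at hK
    obtain ⟨⟨hI, hd⟩, c10, c20, c30, c31, c32⟩ := hK
    rw [det_Mm, ← hdd, norm_mul] at hd
    have hd1 : ‖h₁.det‖ = 1 := by
      rcases mul_self_eq_one_iff.mp hd with h | h
      · exact h
      · nlinarith [norm_nonneg h₁.det]
    have n00 : ‖h₁ 0 0‖ ≤ 1 := by simpa [Mm] using hI 0 0
    have n01 : ‖h₁ 0 1‖ ≤ 1 := by simpa [Mm] using hI 0 3
    have n11 : ‖h₁ 1 1‖ ≤ 1 := by simpa [Mm] using hI 3 3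
    have m00 : ‖h₂ 0 0‖ ≤ 1 := by simpa [Mm] using hI 1 1
    have m10 : ‖h₂ 1 0‖ ≤ 1 := by simpa [Mm] using hI 2 0
    have m11 : ‖h₂ 1 1‖ ≤ 1 := by simpa [Mm] using hI 2 2
    have msum : ‖h₂ 0 1 + h₁ 0 1‖ ≤ 1 := by simpa [Mm] using hI 1 2
    have m01 : ‖h₂ 0 1‖ ≤ 1 := by have := nsub msum n01; simpa using this
    have e20 : ‖h₂ 1 0‖ ≤ (p:ℝ) ^ (-(β:ℤ)) := by simpa [Mm] using c20
    have e30 : ‖h₂ 1 0 + h₁ 1 0‖ ≤ (p:ℝ) ^ (-(β:ℤ)) := by simpa [Mm] using c30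
    have e10 : ‖h₁ 1 0‖ ≤ (p:ℝ) ^ (-(β:ℤ)) := by have := nsub e30 e20; simpa using this
    refine ⟨h₁, h₂, ⟨?_, ?_, hd1, hdd, e10, e20, by simpa [Mm] using c10,
      by simpa [Mm] using c32⟩, rfl⟩
    · intro i j; fin_cases i <;> fin_cases j <;>
        first
        | exact n00 | exact n01 | exact n11
        | exact le_trans e10 (eps_le_one β)
    · intro i j; fin_cases i <;> fin_cases j <;>
        first
        | exact m00 | exact m01 | exact m10 | exact m11
  · rintro ⟨h₁, h₂, ⟨H1, H2, hd1, hdd, c1, c2, c3, c4⟩, rfl⟩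
    have hu1 : IsUnit h₁.det := isUnit_iff_ne_zero.mpr
      (by intro h; rw [h] at hd1; simp at hd1)
    have hu2 : IsUnit h₂.det := by rw [← hdd]; exact hu1
    refine ⟨⟨h₁, h₂, hu1, hu2, hdd, rfl⟩, ?_⟩
    show _ ∈ KKl p β
    rw [gamma_inv, conjA]
    refine ⟨⟨Mm_entries h₁ h₂ H1 H2 c1, ?_⟩, ?_, ?_, ?_, ?_, ?_⟩
    · rw [det_Mm, ← hdd, norm_mul, hd1]; norm_num
    · simpa [Mm] using c3
    · simpa [Mm] using c2
    · simpa [Mm] using nadd c2 c1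
    · simpa [Mm] using c2
    · simpa [Mm] using c4

set_option maxHeartbeats 1000000 in
lemma memB_iff {β : ℕ} {g : Matrix (Fin 4) (Fin 4) ℚ_[p]} :
    g ∈ Bset p β ↔ ∃ h₁ h₂, CondB p β h₁ h₂ ∧ g = iotaMat h₁ h₂ := by
  constructor
  · rintro ⟨⟨h₁, h₂, u1, u2, hdd, rfl⟩, hK⟩
    rw [gammaHat_inv, conjB] at hK
    obtain ⟨⟨hI, hd⟩, c10, c20, c21, c30, c31, c32⟩ := hK
    rw [det_Nm, ← hdd, norm_mul] at hd
    have hd1 : ‖h₁.det‖ = 1 := by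
      rcases mul_self_eq_one_iff.mp hd with h | h
      · exact h
      · nlinarith [norm_nonneg h₁.det]
    have n00 : ‖h₁ 0 0‖ ≤ 1 := by simpa [Nm] using hI 0 0
    have n01 : ‖h₁ 0 1‖ ≤ 1 := by simpa [Nm] using hI 0 1
    have n11 : ‖h₁ 1 1‖ ≤ 1 := by simpa [Nm] using hI 3 3
    have m00 : ‖h₂ 0 0‖ ≤ 1 := by simpa [Nm] using hI 2 2
    have m10 : ‖h₂ 1 0‖ ≤ 1 := by simpa [Nm] using hI 1 0
    have m11 : ‖h₂ 1 1‖ ≤ 1 := by simpa [Nm] using hI 1 1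
    have msum : ‖h₂ 0 1 + h₁ 0 1‖ ≤ (p:ℝ) ^ (-(β:ℤ)) := by
      have h' : Nm h₁ h₂ 2 1 = -(h₂ 0 1 + h₁ 0 1) := by simp [Nm]
      rw [h', norm_neg] at c21; exact_mod_cast c21
    have m01 : ‖h₂ 0 1‖ ≤ 1 := by
      have := nsub (le_trans msum (eps_le_one β)) n01; simpa using this
    have e20 : ‖h₂ 1 0‖ ≤ (p:ℝ) ^ (-(β:ℤ)) := by simpa [Nm] using c10
    have e30 : ‖h₂ 1 0 + h₁ 1 0‖ ≤ (p:ℝ) ^ (-(β:ℤ)) := by simpa [Nm] using c30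
    have e10 : ‖h₁ 1 0‖ ≤ (p:ℝ) ^ (-(β:ℤ)) := by have := nsub e30 e20; simpa using this
    have e11 : ‖h₂ 1 1 - h₁ 1 1‖ ≤ (p:ℝ) ^ (-(β:ℤ)) := by
      rw [norm_sub_rev]; simpa [Nm] using c31
    refine ⟨h₁, h₂, ⟨⟨?_, ?_, hd1, hdd, e10, e20, by simpa [Nm] using c20, e11⟩, msum⟩, rfl⟩
    · intro i j; fin_cases i <;> fin_cases j <;>
        first
        | exact n00 | exact n01 | exact n11
        | exact le_trans e10 (eps_le_one β)
    · intro i j; fin_cases i <;> fin_cases j <;>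
        first
        | exact m00 | exact m01 | exact m10 | exact m11
  · rintro ⟨h₁, h₂, ⟨⟨H1, H2, hd1, hdd, c1, c2, c3, c4⟩, c5⟩, rfl⟩
    have hu1 : IsUnit h₁.det := isUnit_iff_ne_zero.mpr
      (by intro h; rw [h] at hd1; simp at hd1)
    have hu2 : IsUnit h₂.det := by rw [← hdd]; exact hu1
    refine ⟨⟨h₁, h₂, hu1, hu2, hdd, rfl⟩, ?_⟩
    show _ ∈ KB p β
    rw [gammaHat_inv, conjB]
    have c4' : ‖h₁ 1 1 - h₂ 1 1‖ ≤ (p:ℝ) ^ (-(β:ℤ)) := by rw [norm_sub_rev]; exact c4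
    refine ⟨⟨Nm_entries h₁ h₂ H1 H2 c1, ?_⟩, ?_, ?_, ?_, ?_, ?_, ?_⟩
    · rw [det_Nm, ← hdd, norm_mul, hd1]; norm_num
    · simpa [Nm] using c2
    · simpa [Nm] using c3
    · have h' : Nm h₁ h₂ 2 1 = -(h₂ 0 1 + h₁ 0 1) := by simp [Nm]
      rw [h', norm_neg]; exact c5
    · simpa [Nm] using nadd c2 c1
    · simpa [Nm] using c4'
    · simpa [Nm] using c2


lemma d_norm_one {β : ℕ} (hβ : 1 ≤ β) {h₁ h₂ : Matrix (Fin 2) (Fin 2) ℚ_[p]}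
    (hc : CondA p β h₁ h₂) : ‖h₂ 1 1‖ = 1 := by
  obtain ⟨H1, H2, hd1, hdd, c1, c2, c3, c4⟩ := hc
  have hd2 : ‖h₂.det‖ = 1 := by rw [← hdd]; exact hd1
  rw [Matrix.det_fin_two] at hd2
  have hB : ‖h₂ 0 1 * h₂ 1 0‖ < 1 := by
    calc ‖h₂ 0 1 * h₂ 1 0‖ ≤ (p:ℝ) ^ (-(β:ℤ)) := nmul (H2 0 1) c2 (eps_nonneg p β)
      _ < 1 := eps_lt_one hβ
  have hmax : (1:ℝ) ≤ max ‖h₂ 0 0 * h₂ 1 1‖ ‖h₂ 0 1 * h₂ 1 0‖ := by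
    rw [← hd2]
    exact nsub (le_max_left _ _) (le_max_right _ _)
  have hA : (1:ℝ) ≤ ‖h₂ 0 0 * h₂ 1 1‖ := by
    rcases le_max_iff.mp hmax with h | h
    · exact h
    · linarith
  rw [norm_mul] at hA
  have h1 : 1 ≤ ‖h₂ 1 1‖ := by
    nlinarith [H2 0 0, norm_nonneg (h₂ 1 1), norm_nonneg (h₂ 0 0)]
  exact le_antisymm (H2 1 1) h1

noncomputable def uM (p : ℕ) [Fact p.Prime] (a : ℚ_[p]) : Matrix (Fin 2) (Fin 2) ℚ_[p] := !![1, a; 0, 1]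

lemma uM_mul (a : ℚ_[p]) (h : Matrix (Fin 2) (Fin 2) ℚ_[p]) :
    uM p a * h = !![h 0 0 + a * h 1 0, h 0 1 + a * h 1 1; h 1 0, h 1 1] := by
  ext i j
  fin_cases i <;> fin_cases j <;>
    (simp [uM, Matrix.mul_apply, Fin.sum_univ_two, vecHead, vecTail]; try ring)

lemma uM_det (a : ℚ_[p]) : (uM p a).det = 1 := by
  simp [uM, Matrix.det_fin_two]

lemma uM_uM_neg (a : ℚ_[p]) : uM p a * uM p (-a) = 1 := by
  rw [uM_mul]
  simp [uM, Matrix.one_fin_two]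

lemma delta_eq (a : ℕ) : deltaA p a = iotaMat (1 : Matrix (Fin 2) (Fin 2) ℚ_[p]) (uM p a) := by
  ext i j
  fin_cases i <;> fin_cases j <;>
    simp [deltaA, iotaMat, uM, Matrix.single_apply, Matrix.one_apply,
      Matrix.add_apply, Matrix.smul_apply, vecHead, vecTail]

lemma delta_mul (a : ℕ) (h₁ h₂ : Matrix (Fin 2) (Fin 2) ℚ_[p]) :
    deltaA p a * iotaMat h₁ h₂ = iotaMat h₁ (uM p a * h₂) := by
  rw [delta_eq, iota_mul, one_mul]


end Stmt15Aux

open Stmt15Aux in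
set_option maxHeartbeats 1000000 in
theorem stmt15 (p : ℕ) [Fact p.Prime] (β : ℕ) (hβ : 1 ≤ β) :
    Bset p β ⊆ Aset p β ∧
    (∀ a : ℕ, a < p ^ β → deltaA p a ∈ Aset p β) ∧
    (∀ a b : ℕ, a < p ^ β → b < p ^ β → a ≠ b →
      ∀ x ∈ Bset p β, ∀ y ∈ Bset p β, deltaA p a * x ≠ deltaA p b * y) ∧
    (∀ g ∈ Aset p β, ∃ a : ℕ, a < p ^ β ∧ ∃ x ∈ Bset p β, g = deltaA p a * x) := by
  refine ⟨?_, ?_, ?_, ?_⟩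
  · -- B ⊆ A
    intro g hg
    rw [memB_iff] at hg
    obtain ⟨h₁, h₂, ⟨hA, _⟩, rfl⟩ := hg
    exact memA_iff.mpr ⟨h₁, h₂, hA, rfl⟩
  · -- δ_a ∈ A
    intro a _
    refine memA_iff.mpr ⟨1, uM p (a : ℚ_[p]), ⟨?_, ?_, ?_, ?_, ?_, ?_, ?_, ?_⟩, delta_eq a⟩
    · intro i j; fin_cases i <;> fin_cases j <;> simp [Matrix.one_apply]
    · intro i j; fin_cases i <;> fin_cases j <;> simp [uM] <;> exact nat_norm a
    · simp
    · simp [uM_det]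
    · simp [Matrix.one_apply]; try positivity
    · simp [uM]; try positivity
    · simp [uM, Matrix.one_apply]; try positivity
    · simp [uM, Matrix.one_apply]; try positivity
  · -- disjointness
    intro a b ha hb hab x hx y hy hEq
    rw [memB_iff] at hx hy
    obtain ⟨h₁, h₂, hcx, rfl⟩ := hx
    obtain ⟨k₁, k₂, hcy, rfl⟩ := hy
    rw [delta_mul, delta_mul, uM_mul, uM_mul] at hEq
    have E03 : h₁ 0 1 = k₁ 0 1 := by
      simpa [iotaMat] using congrFun (congrFun hEq 0) 3
    have E12 : h₂ 0 1 + (a : ℚ_[p]) * h₂ 1 1 = k₂ 0 1 + (b : ℚ_[p]) * k₂ 1 1 := by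
      simpa [iotaMat] using congrFun (congrFun hEq 1) 2
    have E22 : h₂ 1 1 = k₂ 1 1 := by
      simpa [iotaMat] using congrFun (congrFun hEq 2) 2
    have key : ((a : ℚ_[p]) - b) * h₂ 1 1 = (k₂ 0 1 + k₁ 0 1) - (h₂ 0 1 + h₁ 0 1) := by
      linear_combination E12 + E03 - (b : ℚ_[p]) * E22
    have hd : ‖h₂ 1 1‖ = 1 := d_norm_one hβ hcx.1
    have hnorm : ‖((a : ℚ_[p]) - b)‖ ≤ (p:ℝ) ^ (-(β:ℤ)) := by
      have h1 : ‖((a : ℚ_[p]) - b) * h₂ 1 1‖ ≤ (p:ℝ) ^ (-(β:ℤ)) := by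
        rw [key]; exact nsub hcy.2 hcx.2
      rwa [norm_mul, hd, mul_one] at h1
    have hdvd : ((p:ℤ) ^ β) ∣ ((a:ℤ) - b) := by
      have h2 : ‖(((a:ℤ) - b : ℤ) : ℚ_[p])‖ ≤ (p:ℝ) ^ (-(β:ℤ)) := by push_cast; exact hnorm
      exact_mod_cast (Padic.norm_int_le_pow_iff_dvd _ _).mp h2
    have habs : |(a:ℤ) - b| < (p:ℤ) ^ β := by
      have hpb : ((p:ℤ) ^ β) = ((p ^ β : ℕ) : ℤ) := by push_cast; ring
      rw [abs_sub_lt_iff, hpb]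
      constructor <;> omega
    have : (a:ℤ) - b = 0 := Int.eq_zero_of_abs_lt_dvd hdvd habs
    exact hab (by omega)
  · -- surjectivity
    intro g hg
    rw [memA_iff] at hg
    obtain ⟨h₁, h₂, hc, rfl⟩ := hg
    obtain ⟨H1, H2, hd1, hdd, c1, c2, c3, c4⟩ := hc
    have hd : ‖h₂ 1 1‖ = 1 := d_norm_one hβ ⟨H1, H2, hd1, hdd, c1, c2, c3, c4⟩
    set s : ℚ_[p] := h₂ 0 1 + h₁ 0 1 with hs
    have hzn : ‖s * (h₂ 1 1)⁻¹‖ ≤ 1 := by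
      rw [norm_mul, norm_inv, hd]
      simpa using nadd (H2 0 1) (H1 0 1)
    set z : ℤ_[p] := ⟨s * (h₂ 1 1)⁻¹, hzn⟩ with hz
    set a : ℕ := z.appr β with haa
    have ha : a < p ^ β := z.appr_lt β
    have hspec : ‖(z - (a : ℤ_[p]) : ℤ_[p])‖ ≤ (p:ℝ) ^ (-(β:ℤ)) := by
      rw [PadicInt.norm_le_pow_iff_mem_span_pow]
      exact PadicInt.appr_spec β z
    have hspec' : ‖s * (h₂ 1 1)⁻¹ - (a : ℚ_[p])‖ ≤ (p:ℝ) ^ (-(β:ℤ)) := by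
      have hcoe : ((z - (a : ℤ_[p]) : ℤ_[p]) : ℚ_[p]) = s * (h₂ 1 1)⁻¹ - (a : ℚ_[p]) := by
        push_cast [hz]
        rfl
      calc ‖s * (h₂ 1 1)⁻¹ - (a : ℚ_[p])‖ = ‖(z - (a : ℤ_[p]) : ℤ_[p])‖ := by
            rw [PadicInt.norm_def, hcoe]
        _ ≤ (p:ℝ) ^ (-(β:ℤ)) := hspec
    have hdne : h₂ 1 1 ≠ 0 := by
      intro h; rw [h] at hd; simp at hd
    have hkey : ‖s - (a : ℚ_[p]) * h₂ 1 1‖ ≤ (p:ℝ) ^ (-(β:ℤ)) := by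
      have heq : s - (a : ℚ_[p]) * h₂ 1 1 = (s * (h₂ 1 1)⁻¹ - (a : ℚ_[p])) * h₂ 1 1 := by
        field_simp
        try ring
      rw [heq, norm_mul, hd, mul_one]
      exact hspec'
    set k₂ : Matrix (Fin 2) (Fin 2) ℚ_[p] := uM p (-(a : ℚ_[p])) * h₂ with hk₂
    have hk : k₂ = !![h₂ 0 0 + -(a:ℚ_[p]) * h₂ 1 0, h₂ 0 1 + -(a:ℚ_[p]) * h₂ 1 1;
        h₂ 1 0, h₂ 1 1] := uM_mul _ _
    have hna : ‖(-(a:ℚ_[p]))‖ ≤ 1 := by simpa using nat_norm (p := p) a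
    refine ⟨a, ha, iotaMat h₁ k₂, ?_, ?_⟩
    · refine memB_iff.mpr ⟨h₁, k₂, ⟨⟨H1, ?_, hd1, ?_, c1, ?_, ?_, ?_⟩, ?_⟩, rfl⟩
      · intro i j
        fin_cases i <;> fin_cases j <;> rw [hk]
        · simpa using nadd (H2 0 0) (nmul hna (H2 1 0) zero_le_one)
        · simpa using nadd (H2 0 1) (nmul hna (H2 1 1) zero_le_one)
        · simpa using H2 1 0
        · simpa using H2 1 1
      · rw [hk₂, Matrix.det_mul, uM_det, one_mul]; exact hdd
      · rw [hk]; simpa using c2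
      · have : k₂ 0 0 - h₁ 0 0 = (h₂ 0 0 - h₁ 0 0) + -(a:ℚ_[p]) * h₂ 1 0 := by
          rw [hk]; simp; ring
        rw [this]
        exact nadd c3 (nmul hna c2 (eps_nonneg p β))
      · have : k₂ 1 1 - h₁ 1 1 = h₂ 1 1 - h₁ 1 1 := by rw [hk]; simp
        rw [this]; exact c4
      · have : k₂ 0 1 + h₁ 0 1 = s - (a : ℚ_[p]) * h₂ 1 1 := by
          rw [hk, hs]; simp; ring
        rw [this]; exact hkey
    · rw [delta_mul, hk₂, ← Matrix.mul_assoc, uM_uM_neg, one_mul]
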